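/- Let R be a transitive reflexive relation on a set S admitting a cocycle δ with values in ℕ (δ(x,z) = δ(x,y) + δ(y,z) for composable pairs, and δ(x,y) = 0 iff x = y) which is coherent: every pair (x,y) with δ(x,y) = k ≥ 2 can be written as a composition of k pairs each with δ-value 1. Then δ is the unique such coherent ℕ-valued cocycle on R. -/

import Mathlib

/-- A cocycle on a reflexive transitive relation `R`: additive over composition and
vanishing exactly on the diagonal. -/
def IsCocycle {S : Type*} (R : S → S → Prop) (δ : S → S → ℕ) : Prop :=
  (∀ x y z, R x y → R y z → δ x z = δ x y + δ y z) ∧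
    (∀ x y, R x y → (δ x y = 0 ↔ x = y))

/-- Coherence: every pair of `δ`-value `k ≥ 2` factors as a composition of `k` pairs of
`δ`-value `1`. -/
def IsCoherent {S : Type*} (R : S → S → Prop) (δ : S → S → ℕ) : Prop :=
  ∀ x y (k : ℕ), R x y → δ x y = k → 2 ≤ k →
    ∃ c : Fin (k + 1) → S, c 0 = x ∧ c (Fin.last k) = y ∧
      ∀ i : Fin k, R (c i.castSucc) (c i.succ) ∧ δ (c i.castSucc) (c i.succ) = 1

/-- Along a chain, `R` holds from head to last, and a cocycle sums the step values. -/
lemma chain_sum {S : Type*} (R : S → S → Prop)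
    (hrefl : ∀ x, R x x) (htrans : ∀ x y z, R x y → R y z → R x z)
    (δ : S → S → ℕ) (hδ : IsCocycle R δ) :
    ∀ k (c : Fin (k + 1) → S), (∀ i : Fin k, R (c i.castSucc) (c i.succ)) →
      R (c 0) (c (Fin.last k)) ∧
        δ (c 0) (c (Fin.last k)) = ∑ i : Fin k, δ (c i.castSucc) (c i.succ) := by
  intro k
  induction k with
  | zero =>
      intro c _
      refine ⟨hrefl _, ?_⟩
      simp [(hδ.2 _ _ (hrefl _)).mpr rfl, Fin.last]
  | succ k ih =>
      intro c hc
      have hd : ∀ i : Fin k, R ((c ∘ Fin.castSucc) i.castSucc) ((c ∘ Fin.castSucc) i.succ) := by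
        intro i
        have := hc i.castSucc
        simpa only [Function.comp, Fin.succ_castSucc] using this
      obtain ⟨hR, hsum⟩ := ih (c ∘ Fin.castSucc) hd
      have h0 : (c ∘ Fin.castSucc) 0 = c 0 := by simp
      have hlast : (c ∘ Fin.castSucc) (Fin.last k) = c (Fin.last k).castSucc := rfl
      rw [h0, hlast] at hR hsum
      have hstep := hc (Fin.last k)
      have hsucc : (Fin.last k).succ = Fin.last (k + 1) := rfl
      rw [hsucc] at hstep
      refine ⟨htrans _ _ _ hR hstep, ?_⟩
      rw [hδ.1 _ _ _ hR hstep, hsum, Fin.sum_univ_castSucc]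
      congr 1

/-- A coherent ℕ-valued cocycle on a reflexive transitive relation is unique. -/
theorem coherent_cocycle_unique {S : Type*} (R : S → S → Prop)
    (hrefl : ∀ x, R x x) (htrans : ∀ x y z, R x y → R y z → R x z)
    (δ δ' : S → S → ℕ)
    (hδ : IsCocycle R δ) (hδc : IsCoherent R δ)
    (hδ' : IsCocycle R δ') (hδ'c : IsCoherent R δ') :
    ∀ x y, R x y → δ' x y = δ x y := by
  -- Key step: if `δ x y = 1` then `δ' x y = 1`.
  have key : ∀ (d d' : S → S → ℕ), IsCocycle R d → IsCocycle R d' → IsCoherent R d' →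
      ∀ x y, R x y → d x y = 1 → d' x y = 1 := by
    intro d d' hd hd' hd'c x y hxy h1
    have hne : x ≠ y := by
      intro h; subst h
      rw [(hd.2 _ _ hxy).mpr rfl] at h1; exact absurd h1.symm one_ne_zero
    have hpos : d' x y ≠ 0 := fun h => hne ((hd'.2 _ _ hxy).mp h)
    rcases Nat.lt_or_ge (d' x y) 2 with h2 | h2
    · omega
    · exfalso
      obtain ⟨c, hc0, hclast, hc⟩ := hd'c x y (d' x y) hxy rfl h2
      obtain ⟨_, hsum⟩ := chain_sum R hrefl htrans d hd _ c (fun i => (hc i).1)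
      rw [hc0, hclast] at hsum
      have hge : ∀ i : Fin (d' x y), 1 ≤ d (c i.castSucc) (c i.succ) := by
        intro i
        rcases hc i with ⟨hRi, h1i⟩
        have : c i.castSucc ≠ c i.succ := by
          intro h
          rw [(hd'.2 _ _ hRi).mpr h] at h1i; exact absurd h1i.symm one_ne_zero
        exact Nat.pos_of_ne_zero (fun h => this ((hd.2 _ _ hRi).mp h))
      have : (d' x y : ℕ) ≤ ∑ i : Fin (d' x y), d (c i.castSucc) (c i.succ) := by
        calc (d' x y : ℕ) = ∑ _i : Fin (d' x y), 1 := by simp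
          _ ≤ _ := Finset.sum_le_sum (fun i _ => hge i)
      omega
  intro x y hxy
  rcases Nat.lt_or_ge (δ x y) 2 with h2 | h2
  · interval_cases h : δ x y
    · exact (hδ'.2 _ _ hxy).mpr ((hδ.2 _ _ hxy).mp h)
    · exact key δ δ' hδ hδ' hδ'c x y hxy h
  · obtain ⟨c, hc0, hclast, hc⟩ := hδc x y (δ x y) hxy rfl h2
    obtain ⟨_, hsum⟩ := chain_sum R hrefl htrans δ' hδ' _ c (fun i => (hc i).1)
    rw [hc0, hclast] at hsum
    rw [hsum]
    have : ∀ i : Fin (δ x y), δ' (c i.castSucc) (c i.succ) = 1 := fun i =>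
      key δ δ' hδ hδ' hδ'c _ _ (hc i).1 (hc i).2
    simp [this]
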